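/- Let n ≥ 2 and m ≥ 2n+2 be integers with m even. Let G = K_1 + m·K_{2n+1}, the graph obtained by joining a single vertex v to all vertices of m disjoint copies of K_{2n+1}. Then G has odd order, minimum degree 2n+1, G contains a spanning subgraph F with d_F(u) ∈ {1,3,...,2n−1,2n} for all vertices u, but the condition o(G − S) ≤ 2n|S| fails for S = {v}. -/

import Mathlib

open SimpleGraph

/-- Number of odd-order components of `G - S`. -/
noncomputable def oddComp {V : Type*} [Fintype V] (G : SimpleGraph V) (S : Set V) : ℕ :=
  Nat.card {c : (G.induce Sᶜ).ConnectedComponent // Odd (Nat.card c.supp)}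

/-- Degree of `v` in `F` (no decidability assumptions). -/
noncomputable def ndeg {V : Type*} (F : SimpleGraph V) (v : V) : ℕ :=
  Nat.card (F.neighborSet v)

/-- Base relation for `K_1 + m·K_{2n+1}`: an apex vertex joined to all vertices of
`m` disjoint copies of `K_{2n+1}`. -/
def joinRel (m n : ℕ) :
    Option (Fin m × Fin (2 * n + 1)) → Option (Fin m × Fin (2 * n + 1)) → Prop
  | some p, some q => p.1 = q.1
  | none, some _ => True
  | _, _ => False

section Aux

variable (m n : ℕ)

/-- Relation for the factor `F`. -/
def fRel : Option (Fin m × Fin (2 * n + 1)) → Option (Fin m × Fin (2 * n + 1)) → Prop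
  | some p, some q => p.1 = q.1 ∧ ¬(p.1.val = 0 ∧ p.2.val = 0 ∧ q.2.val = 1) ∧
      ¬(p.1.val = 0 ∧ p.2.val = 1 ∧ q.2.val = 0)
  | none, some q => q.1.val = 0 ∧ q.2.val = 0
  | _, _ => False

variable {m n}

lemma ncard_compl_singleton (j : Fin (2*n+1)) : ({j} : Set (Fin (2*n+1)))ᶜ.ncard = 2*n := by
  have h := Set.ncard_add_ncard_compl ({j} : Set (Fin (2*n+1)))
  simp [Set.ncard_singleton, Nat.card_eq_fintype_card] at h
  omega

lemma ncard_compl_pair {j k : Fin (2*n+1)} (hjk : j ≠ k) :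
    ({j,k} : Set (Fin (2*n+1)))ᶜ.ncard = 2*n-1 := by
  have h := Set.ncard_add_ncard_compl ({j,k} : Set (Fin (2*n+1)))
  rw [Set.ncard_pair hjk, Nat.card_eq_fintype_card] at h
  simp at h; omega

lemma inj_some_pair (i : Fin m) :
    Function.Injective (fun j : Fin (2*n+1) => (some (i, j) : Option (Fin m × Fin (2*n+1)))) := by
  intro x y h; simpa using h

lemma ncard_insert_image (i : Fin m) (s : Set (Fin (2*n+1))) :
    (insert none ((fun j => (some (i, j) : Option (Fin m × Fin (2*n+1)))) '' s)).ncard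
      = s.ncard + 1 := by
  rw [Set.ncard_insert_of_notMem (by simp), Set.ncard_image_of_injective _ (inj_some_pair i)]

lemma ncard_image (i : Fin m) (s : Set (Fin (2*n+1))) :
    ((fun j => (some (i, j) : Option (Fin m × Fin (2*n+1)))) '' s).ncard = s.ncard :=
  Set.ncard_image_of_injective _ (inj_some_pair i)

/-- Neighbor set in `G` of a clique vertex. -/
lemma G_nbr_some (p : Fin m × Fin (2*n+1)) :
    (SimpleGraph.fromRel (joinRel m n)).neighborSet (some p)
      = insert none ((fun j => (some (p.1, j) : Option (Fin m × Fin (2*n+1)))) '' {p.2}ᶜ) := by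
  ext x
  cases x with
  | none => simp [joinRel]
  | some q =>
      simp only [mem_neighborSet, fromRel_adj, joinRel, Set.mem_insert_iff,
        Set.mem_image, Set.mem_compl_iff, Set.mem_singleton_iff]
      constructor
      · rintro ⟨hne, h⟩
        have h1 : p.1 = q.1 := h.elim id Eq.symm
        refine Or.inr ⟨q.2, fun hq => hne ?_, ?_⟩
        · simp only [Option.some.injEq, Prod.ext_iff]; exact ⟨h1, hq.symm⟩
        · rw [h1]
      · rintro (h | ⟨j, hj, hjq⟩)
        · exact absurd h (by simp)
        · obtain rfl : (p.1, j) = q := Option.some_injective _ hjq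
          exact ⟨fun hc => hj (congrArg Prod.snd (Option.some_injective _ hc)).symm, Or.inl rfl⟩

lemma G_nbr_none :
    (SimpleGraph.fromRel (joinRel m n)).neighborSet none
      = Set.range (some : Fin m × Fin (2*n+1) → Option (Fin m × Fin (2*n+1))) := by
  ext x
  cases x with
  | none => simp
  | some q => simp [joinRel]

lemma ndeg_eq_ncard {V : Type*} (F : SimpleGraph V) (v : V) :
    ndeg F v = (F.neighborSet v).ncard := by
  rw [ndeg, Nat.card_coe_set_eq]

lemma ndeg_G_some (p : Fin m × Fin (2*n+1)) :
    ndeg (SimpleGraph.fromRel (joinRel m n)) (some p) = 2*n+1 := by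
  rw [ndeg_eq_ncard, G_nbr_some, ncard_insert_image, ncard_compl_singleton]

lemma ndeg_G_none :
    ndeg (SimpleGraph.fromRel (joinRel m n)) none = m * (2*n+1) := by
  rw [ndeg, G_nbr_none, Nat.card_congr (Equiv.ofInjective _ (Option.some_injective _)).symm]
  simp [Nat.card_eq_fintype_card]

end Aux

section Factor

variable {m n : ℕ}

lemma fRel_none_some (q : Fin m × Fin (2*n+1)) :
    fRel m n none (some q) ↔ q.1.val = 0 ∧ q.2.val = 0 := Iff.rfl

lemma fRel_some_none (q : Fin m × Fin (2*n+1)) :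
    fRel m n (some q) none ↔ False := Iff.rfl

lemma fRel_none_none :
    fRel m n none none ↔ False := Iff.rfl

lemma fRel_some_some (p q : Fin m × Fin (2*n+1)) :
    fRel m n (some p) (some q) ↔ p.1 = q.1 ∧ ¬(p.1.val = 0 ∧ p.2.val = 0 ∧ q.2.val = 1) ∧
      ¬(p.1.val = 0 ∧ p.2.val = 1 ∧ q.2.val = 0) := Iff.rfl

lemma F_le_G : SimpleGraph.fromRel (fRel m n) ≤ SimpleGraph.fromRel (joinRel m n) := by
  intro a b hab
  rw [fromRel_adj] at hab ⊢
  refine ⟨hab.1, ?_⟩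
  have h2 := hab.2
  cases a <;> cases b <;>
    simp only [fRel_none_none, fRel_none_some, fRel_some_none, fRel_some_some, joinRel,
      or_false, false_or] at h2 ⊢ <;> tauto

lemma F_nbr_none {i0 : Fin m} {j0 : Fin (2*n+1)} (hi0 : i0.val = 0) (hj0 : j0.val = 0) :
    (SimpleGraph.fromRel (fRel m n)).neighborSet none
      = {some (i0, j0)} := by
  ext x
  cases x with
  | none => simp
  | some q =>
      simp only [mem_neighborSet, fromRel_adj, fRel_none_some, fRel_some_none, or_false,
        Set.mem_singleton_iff, Option.some.injEq]
      constructor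
      · rintro ⟨-, h1, h2⟩
        refine Prod.ext (Fin.ext ?_) (Fin.ext ?_) <;> simp <;> omega
      · rintro rfl
        exact ⟨by simp, hi0, hj0⟩

lemma F_nbr_a {p : Fin m × Fin (2*n+1)} (hp1 : p.1.val = 0) (hp2 : p.2.val = 0)
    {j1 : Fin (2*n+1)} (hj1 : j1.val = 1) :
    (SimpleGraph.fromRel (fRel m n)).neighborSet (some p)
      = insert none ((fun j => (some (p.1, j) : Option (Fin m × Fin (2*n+1)))) '' {p.2, j1}ᶜ) := by
  ext x
  cases x with
  | none => simp [fRel_some_none, fRel_none_some, hp1, hp2]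
  | some q =>
      simp only [mem_neighborSet, fromRel_adj, fRel_some_some, Set.mem_insert_iff, Set.mem_image,
        Set.mem_compl_iff, Set.mem_singleton_iff, not_or]
      constructor
      · rintro ⟨hne, h⟩
        have h1 : p.1 = q.1 := by tauto
        have hq1 : ¬ q.2.val = 1 := by
          rcases h with ⟨-, hA, -⟩ | ⟨-, -, hB⟩
          · exact fun hc => hA ⟨hp1, hp2, hc⟩
          · exact fun hc => hB (by rw [h1] at hp1; exact ⟨hp1, hc, hp2⟩)
        have hq2 : q.2 ≠ p.2 := fun hc => hne (by
          simp only [Option.some.injEq, Prod.ext_iff]; exact ⟨h1, hc.symm⟩)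
        refine Or.inr ⟨q.2, ⟨hq2, fun hc => hq1 (by rw [hc, hj1])⟩, by rw [h1]⟩
      · rintro (h | ⟨j, ⟨hj, hj1'⟩, hjq⟩)
        · exact absurd h (by simp)
        · obtain rfl : (p.1, j) = q := Option.some_injective _ hjq
          refine ⟨fun hc => hj ?_, Or.inl ⟨rfl, fun h => hj1' (Fin.ext (by rw [hj1]; exact h.2.2)),
            fun h => by have := h.2.1; omega⟩⟩
          exact ((congrArg Prod.snd (Option.some_injective _ hc))).symm

lemma F_nbr_b {p : Fin m × Fin (2*n+1)} (hp1 : p.1.val = 0) (hp2 : p.2.val = 1)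
    {j0 : Fin (2*n+1)} (hj0 : j0.val = 0) :
    (SimpleGraph.fromRel (fRel m n)).neighborSet (some p)
      = (fun j => (some (p.1, j) : Option (Fin m × Fin (2*n+1)))) '' {p.2, j0}ᶜ := by
  ext x
  cases x with
  | none =>
      simp only [mem_neighborSet, fromRel_adj, fRel_some_none, fRel_none_some, false_or,
        Set.mem_image, Set.mem_compl_iff]
      constructor
      · rintro ⟨-, -, h⟩
        omega
      · rintro ⟨j, hj, hjq⟩
        exact absurd hjq (by simp)
  | some q =>
      simp only [mem_neighborSet, fromRel_adj, fRel_some_some, Set.mem_image,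
        Set.mem_compl_iff, Set.mem_insert_iff, Set.mem_singleton_iff, not_or]
      constructor
      · rintro ⟨hne, h⟩
        have h1 : p.1 = q.1 := by tauto
        have hq1 : ¬ q.2.val = 0 := by
          rcases h with ⟨-, -, hB⟩ | ⟨-, hA, -⟩
          · exact fun hc => hB ⟨hp1, hp2, hc⟩
          · exact fun hc => hA (by rw [h1] at hp1; exact ⟨hp1, hc, hp2⟩)
        have hq2 : q.2 ≠ p.2 := fun hc => hne (by
          simp only [Option.some.injEq, Prod.ext_iff]; exact ⟨h1, hc.symm⟩)
        refine ⟨q.2, ⟨hq2, fun hc => hq1 (by rw [hc, hj0])⟩, by rw [h1]⟩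
      · rintro ⟨j, ⟨hj, hj0'⟩, hjq⟩
        obtain rfl : (p.1, j) = q := Option.some_injective _ hjq
        refine ⟨fun hc => hj ?_, Or.inl ⟨rfl, fun h => by have := h.2.1; omega,
          fun h => hj0' (Fin.ext (by rw [hj0]; exact h.2.2))⟩⟩
        exact ((congrArg Prod.snd (Option.some_injective _ hc))).symm

lemma F_nbr_c {p : Fin m × Fin (2*n+1)} (hp : ¬(p.1.val = 0 ∧ p.2.val ≤ 1)) :
    (SimpleGraph.fromRel (fRel m n)).neighborSet (some p)
      = (fun j => (some (p.1, j) : Option (Fin m × Fin (2*n+1)))) '' {p.2}ᶜ := by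
  ext x
  cases x with
  | none =>
      simp only [mem_neighborSet, fromRel_adj, fRel_some_none, fRel_none_some, false_or,
        Set.mem_image, Set.mem_compl_iff]
      constructor
      · rintro ⟨-, h1, h2⟩
        exact absurd ⟨h1, by omega⟩ hp
      · rintro ⟨j, hj, hjq⟩
        exact absurd hjq (by simp)
  | some q =>
      simp only [mem_neighborSet, fromRel_adj, fRel_some_some, Set.mem_image,
        Set.mem_compl_iff, Set.mem_singleton_iff]
      constructor
      · rintro ⟨hne, h⟩
        have h1 : p.1 = q.1 := by tauto
        have hq2 : q.2 ≠ p.2 := fun hc => hne (by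
          simp only [Option.some.injEq, Prod.ext_iff]; exact ⟨h1, hc.symm⟩)
        exact ⟨q.2, hq2, by rw [h1]⟩
      · rintro ⟨j, hj, hjq⟩
        obtain rfl : (p.1, j) = q := Option.some_injective _ hjq
        refine ⟨fun hc => hj ?_, Or.inl ⟨rfl, fun h => hp ⟨h.1, by omega⟩,
          fun h => hp ⟨h.1, by omega⟩⟩⟩
        exact ((congrArg Prod.snd (Option.some_injective _ hc))).symm

end Factor



section Comp

variable {m n : ℕ}

/-- Clique index of a vertex. -/
def idx (hm0 : 0 < m) : Option (Fin m × Fin (2*n+1)) → Fin m :=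
  fun o => o.elim ⟨0, hm0⟩ Prod.fst

lemma idx_some (hm0 : 0 < m) (p : Fin m × Fin (2*n+1)) : idx hm0 (some p) = p.1 := rfl

lemma val_ne_none {a : ↥(({none} : Set (Option (Fin m × Fin (2*n+1))))ᶜ)} :
    ∃ p, a.val = some p := by
  have := a.2
  cases h : a.val with
  | none => exact absurd (h ▸ this) (by simp)
  | some p => exact ⟨p, rfl⟩

lemma adj_idx (hm0 : 0 < m)
    {a b : ↥(({none} : Set (Option (Fin m × Fin (2*n+1))))ᶜ)}
    (h : ((SimpleGraph.fromRel (joinRel m n)).induce ({none} : Set _)ᶜ).Adj a b) :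
    idx hm0 a.val = idx hm0 b.val := by
  obtain ⟨p, hp⟩ := val_ne_none (a := a)
  obtain ⟨q, hq⟩ := val_ne_none (a := b)
  have h' : (SimpleGraph.fromRel (joinRel m n)).Adj a.val b.val := h
  rw [hp, hq] at h' ⊢
  rw [fromRel_adj] at h'
  have : p.1 = q.1 := by
    rcases h'.2 with h2 | h2
    · exact h2
    · exact h2.symm
  rw [idx_some, idx_some, this]

lemma walk_idx (hm0 : 0 < m)
    {a b : ↥(({none} : Set (Option (Fin m × Fin (2*n+1))))ᶜ)}
    (w : ((SimpleGraph.fromRel (joinRel m n)).induce ({none} : Set _)ᶜ).Walk a b) :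
    idx hm0 a.val = idx hm0 b.val := by
  induction w with
  | nil => rfl
  | cons h _ ih => exact (adj_idx hm0 h).trans ih

lemma reach_of_idx (hm0 : 0 < m)
    {a b : ↥(({none} : Set (Option (Fin m × Fin (2*n+1))))ᶜ)}
    (h : idx hm0 a.val = idx hm0 b.val) :
    ((SimpleGraph.fromRel (joinRel m n)).induce ({none} : Set _)ᶜ).Reachable a b := by
  obtain ⟨p, hp⟩ := val_ne_none (a := a)
  obtain ⟨q, hq⟩ := val_ne_none (a := b)
  rw [hp, hq, idx_some, idx_some] at h
  by_cases hab : a = b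
  · exact hab ▸ Reachable.refl a
  · refine Adj.reachable ?_
    show (SimpleGraph.fromRel (joinRel m n)).Adj a.val b.val
    rw [hp, hq, fromRel_adj]
    refine ⟨fun hc => hab (Subtype.ext (by rw [hp, hq, hc])), Or.inl ?_⟩
    show p.1 = q.1
    exact h

lemma reach_iff_idx (hm0 : 0 < m)
    {a b : ↥(({none} : Set (Option (Fin m × Fin (2*n+1))))ᶜ)} :
    ((SimpleGraph.fromRel (joinRel m n)).induce ({none} : Set _)ᶜ).Reachable a b ↔
      idx hm0 a.val = idx hm0 b.val :=
  ⟨fun h => h.elim (walk_idx hm0), reach_of_idx hm0⟩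

end Comp

/-- The condition `o(G-S) ≤ 2n|S|` is not necessary for an `H_n`-factor. -/
theorem stmt_6 (n m : ℕ) (hn : 2 ≤ n) (hm : 2 * n + 2 ≤ m) (hme : Even m) :
    let G := SimpleGraph.fromRel (joinRel m n)
    Odd (Fintype.card (Option (Fin m × Fin (2 * n + 1)))) ∧
    (∀ v, 2 * n + 1 ≤ ndeg G v) ∧ (∃ v, ndeg G v = 2 * n + 1) ∧
    (∃ F : SimpleGraph (Option (Fin m × Fin (2 * n + 1))), F ≤ G ∧
        ∀ u, (Odd (ndeg F u) ∧ ndeg F u ≤ 2 * n - 1) ∨ ndeg F u = 2 * n) ∧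
    ¬ oddComp G ({none} : Set (Option (Fin m × Fin (2 * n + 1)))) ≤ 2 * n * 1 := by
  intro G
  have hm0 : 0 < m := by omega
  refine ⟨?_, ?_, ?_, ?_, ?_⟩
  · obtain ⟨k, rfl⟩ := hme
    simp only [Fintype.card_option, Fintype.card_prod, Fintype.card_fin]
    exact ⟨(2*n+1)*k, by ring⟩
  · intro v
    cases v with
    | none => rw [ndeg_G_none]; nlinarith
    | some p => rw [ndeg_G_some]
  · exact ⟨some (⟨0, hm0⟩, ⟨0, by omega⟩), ndeg_G_some _⟩
  · refine ⟨SimpleGraph.fromRel (fRel m n), F_le_G, ?_⟩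
    intro u
    cases u with
    | none =>
        rw [ndeg_eq_ncard, F_nbr_none (i0 := ⟨0, hm0⟩) (j0 := ⟨0, by omega⟩) rfl rfl,
          Set.ncard_singleton]
        exact Or.inl ⟨odd_one, by omega⟩
    | some p =>
        by_cases h1 : p.1.val = 0 ∧ p.2.val = 0
        · rw [ndeg_eq_ncard, F_nbr_a h1.1 h1.2 (j1 := ⟨1, by omega⟩) rfl, ncard_insert_image,
            ncard_compl_pair (fun hc => by
              have := congrArg Fin.val hc; simp at this; omega)]
          right; omega
        · by_cases h2 : p.1.val = 0 ∧ p.2.val = 1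
          · rw [ndeg_eq_ncard, F_nbr_b h2.1 h2.2 (j0 := ⟨0, by omega⟩) rfl, ncard_image,
              ncard_compl_pair (fun hc => by
                have := congrArg Fin.val hc; rw [h2.2] at this; simp at this)]
            exact Or.inl ⟨⟨n - 1, by omega⟩, by omega⟩
          · rw [ndeg_eq_ncard, F_nbr_c (by omega), ncard_image, ncard_compl_singleton]
            right; rfl
  · intro hle
    have key : ∀ a : ↥(({none} : Set (Option (Fin m × Fin (2*n+1))))ᶜ),
        Nat.card ((G.induce ({none} : Set _)ᶜ).connectedComponentMk a).supp = 2*n+1 := by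
      intro a
      obtain ⟨p, hp⟩ := val_ne_none (a := a)
      let f : Fin (2*n+1) → ↥(((G.induce ({none} : Set _)ᶜ).connectedComponentMk a).supp) :=
        fun j => ⟨⟨some (p.1, j), by simp⟩, by
          rw [ConnectedComponent.mem_supp_iff, ConnectedComponent.eq]
          exact reach_of_idx hm0 (by rw [hp, idx_some, idx_some])⟩
      have hbij : Function.Bijective f := by
        constructor
        · intro j j' hjj
          have : (some (p.1, j) : Option (Fin m × Fin (2*n+1))) = some (p.1, j') :=
            congrArg (fun b => b.val.val) hjj
          simpa using this
        · intro b
          obtain ⟨q, hq⟩ := val_ne_none (a := b.val)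
          have hb : idx hm0 b.val.val = idx hm0 a.val :=
            walk_idx hm0 ((ConnectedComponent.eq.mp b.2).some
              : (G.induce ({none} : Set _)ᶜ).Walk b.val a)
          rw [hq, hp, idx_some, idx_some] at hb
          refine ⟨q.2, Subtype.ext (Subtype.ext ?_)⟩
          show (some (p.1, q.2) : Option (Fin m × Fin (2*n+1))) = b.val.val
          rw [hq]
          exact congrArg some (Prod.ext hb.symm rfl)
      have h1 := Nat.card_eq_of_bijective f hbij
      rw [← h1, Nat.card_eq_fintype_card, Fintype.card_fin]
    have hsupp : ∀ c : (G.induce ({none} : Set _)ᶜ).ConnectedComponent,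
        Nat.card c.supp = 2*n+1 := by
      intro c
      induction c using SimpleGraph.ConnectedComponent.ind with
      | _ a => exact key a
    have hall : ∀ c : (G.induce ({none} : Set _)ᶜ).ConnectedComponent,
        Odd (Nat.card c.supp) := fun c => by rw [hsupp]; exact ⟨n, by omega⟩
    let fc : (G.induce ({none} : Set _)ᶜ).ConnectedComponent → Fin m :=
      ConnectedComponent.lift (fun a => idx hm0 a.val) (fun v w p _ => walk_idx hm0 p)
    have hfc : Function.Bijective fc := by
      constructor
      · intro c d
        induction c using SimpleGraph.ConnectedComponent.ind with
        | _ a =>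
          induction d using SimpleGraph.ConnectedComponent.ind with
          | _ b =>
            intro h
            exact ConnectedComponent.sound (reach_of_idx hm0 h)
      · intro i
        exact ⟨(G.induce ({none} : Set _)ᶜ).connectedComponentMk
          ⟨some (i, ⟨0, by omega⟩), by simp⟩, rfl⟩
    have hcard : oddComp G ({none} : Set (Option (Fin m × Fin (2*n+1)))) = m := by
      rw [oddComp, Nat.card_congr (Equiv.subtypeUnivEquiv hall),
        Nat.card_eq_of_bijective fc hfc, Nat.card_eq_fintype_card, Fintype.card_fin]
    rw [hcard] at hle
    omega
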